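/- Let w be the cyclic DFS walk on the plane rooted tree T_0 (obtained from a tree T with a unital arrowflow, satisfying 'ascending children precede descending children'), and let Ω be the cyclically ordered set of in-indices. Then in-indices and forward steps interlace: between any two cyclically consecutive in-indices u and v there is exactly one forward step in the subwalk w_u w_{u+1} … w_v; moreover every step before the forward step in this subwalk is upward-backward and every step after it is downward-backward. -/

import Mathlib

/-- A plane rooted tree: a root label together with an ordered list of subtrees. -/
inductive PTree (V : Type) : Type
  | node : V → List (PTree V) → PTree V

namespace PTree

variable {V : Type}

/-- The root label of a plane rooted tree. -/
def root : PTree V → V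
  | node v _ => v

/-- The depth-first-search walk: `dfs (node v [t₁,…,tₘ]) = v dfs(t₁) v … v dfs(tₘ) v`. -/
def dfs : PTree V → List V
  | node v ts => v :: (ts.attach.map (fun t => dfs t.1 ++ [v])).flatten
decreasing_by simp only [PTree.node.sizeOf_spec]; have := List.sizeOf_lt_of_mem t.2; omega

/-- The list of vertex labels of a plane rooted tree. -/
def verts : PTree V → List V
  | node v ts => v :: (ts.attach.map (fun t => verts t.1)).flatten
decreasing_by simp only [PTree.node.sizeOf_spec]; have := List.sizeOf_lt_of_mem t.2; omega

/-- The downward arcs (from each vertex to each of its children). -/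
def downArcs : PTree V → List (V × V)
  | node v ts => (ts.map fun t => (v, root t)) ++ (ts.attach.map (fun t => downArcs t.1)).flatten
decreasing_by simp only [PTree.node.sizeOf_spec]; have := List.sizeOf_lt_of_mem t.2; omega

/-- `AscFirst A0 t` : at every vertex, ascending children precede descending children. -/
def AscFirst (A0 : Set (V × V)) : PTree V → Prop
  | node v ts => ts.Pairwise (fun t₁ t₂ => (root t₂, v) ∈ A0 → (root t₁, v) ∈ A0) ∧
      ∀ t ∈ ts.attach, AscFirst A0 t.1
decreasing_by simp only [PTree.node.sizeOf_spec]; have := List.sizeOf_lt_of_mem t.2; omega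

/-- The period of the cyclic DFS walk (`2n` for a tree with `n` edges). -/
def cyclen (t : PTree V) : ℕ := (dfs t).length - 1

/-- The cyclic DFS walk, as a function of an index taken modulo `cyclen t`. -/
def cyc (t : PTree V) (k : ℕ) : Option V := (dfs t)[k % cyclen t]?

/-- The step at (cyclic) position `p` is forward, i.e. its arc lies in `A0`. -/
def ForwardAt (t : PTree V) (A0 : Set (V × V)) (p : ℕ) : Prop :=
  ∃ x y, cyc t p = some x ∧ cyc t (p + 1) = some y ∧ (x, y) ∈ A0

/-- The step at (cyclic) position `p` is upward-backward. -/
def UpBackAt (t : PTree V) (A0 : Set (V × V)) (p : ℕ) : Prop :=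
  ∃ x y, cyc t p = some x ∧ cyc t (p + 1) = some y ∧
    (y, x) ∈ downArcs t ∧ (x, y) ∉ A0

/-- The step at (cyclic) position `p` is downward-backward. -/
def DownBackAt (t : PTree V) (A0 : Set (V × V)) (p : ℕ) : Prop :=
  ∃ x y, cyc t p = some x ∧ cyc t (p + 1) = some y ∧
    (x, y) ∈ downArcs t ∧ (x, y) ∉ A0

/-- `InIndex t A0 i k` : `k` is the in-index of the vertex `i ≠ r` : `w k = i`, every
occurrence of an ascending child of `i` in the DFS walk is before `k`, and every
occurrence of a descending child of `i` is after `k`. -/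
def InIndex (t : PTree V) (A0 : Set (V × V)) (i : V) (k : ℕ) : Prop :=
  k < cyclen t ∧ (dfs t)[k]? = some i ∧ i ≠ root t ∧
    ∀ (l : ℕ) (c : V), (dfs t)[l]? = some c → (i, c) ∈ downArcs t →
      ((c, i) ∈ A0 → l < k) ∧ ((i, c) ∈ A0 → k < l)

section Aux

variable {V : Type}

theorem dfs_node (v : V) (ts : List (PTree V)) :
    dfs (node v ts) = v :: (ts.map (fun t => dfs t ++ [v])).flatten := by
  rw [dfs]
  congr 1
  rw [← List.attach_map_val (l := ts) (f := fun t => dfs t ++ [v])]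

theorem verts_node (v : V) (ts : List (PTree V)) :
    verts (node v ts) = v :: (ts.map verts).flatten := by
  rw [verts]
  congr 1
  rw [← List.attach_map_val (l := ts) (f := verts)]

theorem downArcs_node (v : V) (ts : List (PTree V)) :
    downArcs (node v ts) = (ts.map fun t => (v, root t)) ++ (ts.map downArcs).flatten := by
  rw [downArcs]
  congr 1
  rw [← List.attach_map_val (l := ts) (f := downArcs)]

theorem ascFirst_node (A0 : Set (V × V)) (v : V) (ts : List (PTree V)) :
    AscFirst A0 (node v ts) ↔ ts.Pairwise (fun t₁ t₂ => (root t₂, v) ∈ A0 → (root t₁, v) ∈ A0) ∧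
      ∀ t ∈ ts, AscFirst A0 t := by
  rw [AscFirst]
  simp

theorem dfs_ne_nil : ∀ (s : PTree V), dfs s ≠ []
  | node v ts => by rw [dfs_node]; simp

theorem head?_dfs : ∀ (s : PTree V), (dfs s).head? = some (root s)
  | node v ts => by rw [dfs_node]; simp [root]

theorem getLast?_dfs : ∀ (s : PTree V), (dfs s).getLast? = some (root s)
  | node v ts => by
      rw [dfs_node, root]
      induction ts using List.reverseRecOn with
      | nil => rfl
      | append_singleton cs c _ =>
        rw [List.map_append, List.flatten_append]
        rw [show v :: ((List.map (fun t => dfs t ++ [v]) cs).flatten ++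
          ((List.map (fun t => dfs t ++ [v]) [c]).flatten)) =
          (v :: ((List.map (fun t => dfs t ++ [v]) cs).flatten ++ dfs c)) ++ [v] by simp]
        exact List.getLast?_concat

end Aux
section Aux2

variable {V : Type}

theorem ptree_ind (P : PTree V → Prop)
    (h : ∀ v ts, (∀ c ∈ ts, P c) → P (node v ts)) : ∀ s, P s := by
  have key : ∀ (n : ℕ) (s : PTree V), sizeOf s ≤ n → P s := by
    intro n
    induction n using Nat.strong_induction_on with
    | _ n ih =>
      intro s hs
      obtain ⟨v, ts⟩ := s
      apply h
      intro c hc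
      have h1 := List.sizeOf_lt_of_mem hc
      have h2 : sizeOf (node v ts) = 1 + sizeOf v + sizeOf ts := by simp
      exact ih (sizeOf c) (by omega) c le_rfl
  exact fun s => key (sizeOf s) s le_rfl

theorem mem_verts_of_mem_dfs : ∀ (s : PTree V), ∀ x ∈ dfs s, x ∈ verts s := by
  apply ptree_ind
  intro v ts IH x hx
  rw [dfs_node] at hx
  rw [verts_node]
  rcases List.mem_cons.1 hx with h | h
  · simp [h]
  · obtain ⟨l, hl, hxl⟩ := List.mem_flatten.1 h
    obtain ⟨c, hc, rfl⟩ := List.mem_map.1 hl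
    rcases List.mem_append.1 hxl with h' | h'
    · have := IH c hc x h'
      simp only [List.mem_cons, List.mem_flatten]
      exact Or.inr ⟨verts c, List.mem_map.2 ⟨c, hc, rfl⟩, this⟩
    · simp at h'
      simp [h']

theorem root_mem_verts (s : PTree V) : root s ∈ verts s := by
  obtain ⟨v, ts⟩ := s
  rw [verts_node, root]
  simp

theorem arc_cases {v : V} {ts : List (PTree V)} {x y : V} :
    (x, y) ∈ downArcs (node v ts) ↔
      (x = v ∧ ∃ c ∈ ts, y = root c) ∨ ∃ c ∈ ts, (x, y) ∈ downArcs c := by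
  rw [downArcs_node]
  simp only [List.mem_append, List.mem_map, List.mem_flatten]
  constructor
  · rintro (⟨c, hc, hcy⟩ | ⟨l, ⟨c, hc, rfl⟩, hxy⟩)
    · obtain ⟨h1, h2⟩ := Prod.mk.injEq .. ▸ hcy
      exact Or.inl ⟨h1.symm, c, hc, h2.symm⟩
    · exact Or.inr ⟨c, hc, hxy⟩
  · rintro (⟨rfl, c, hc, rfl⟩ | ⟨c, hc, h⟩)
    · exact Or.inl ⟨c, hc, rfl⟩
    · exact Or.inr ⟨downArcs c, ⟨c, hc, rfl⟩, h⟩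

theorem arc_fst_mem : ∀ (s : PTree V), ∀ x y : V, (x, y) ∈ downArcs s → x ∈ verts s := by
  apply ptree_ind
  intro v ts IH x y h
  rw [verts_node]
  rcases arc_cases.1 h with ⟨rfl, _⟩ | ⟨c, hc, h'⟩
  · simp
  · have := IH c hc x y h'
    simp only [List.mem_cons, List.mem_flatten]
    exact Or.inr ⟨verts c, List.mem_map.2 ⟨c, hc, rfl⟩, this⟩

theorem arc_snd_mem : ∀ (s : PTree V), ∀ x y : V, (x, y) ∈ downArcs s → y ∈ verts s := by
  apply ptree_ind
  intro v ts IH x y h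
  rw [verts_node]
  simp only [List.mem_cons, List.mem_flatten]
  rcases arc_cases.1 h with ⟨rfl, c, hc, rfl⟩ | ⟨c, hc, h'⟩
  · exact Or.inr ⟨verts c, List.mem_map.2 ⟨c, hc, rfl⟩, root_mem_verts c⟩
  · exact Or.inr ⟨verts c, List.mem_map.2 ⟨c, hc, rfl⟩, IH c hc x y h'⟩

theorem arc_snd_mem_child {v : V} {ts : List (PTree V)} {x y : V}
    (h : (x, y) ∈ downArcs (node v ts)) : ∃ c ∈ ts, y ∈ verts c := by
  rcases arc_cases.1 h with ⟨rfl, c, hc, rfl⟩ | ⟨c, hc, h'⟩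
  · exact ⟨c, hc, root_mem_verts c⟩
  · exact ⟨c, hc, arc_snd_mem c x y h'⟩

theorem nodup_vnot {v : V} {ts : List (PTree V)} (h : (verts (node v ts)).Nodup) :
    ∀ c ∈ ts, v ∉ verts c := by
  rw [verts_node] at h
  intro c hc hv
  exact (List.nodup_cons.1 h).1 (List.mem_flatten.2 ⟨verts c, List.mem_map.2 ⟨c, hc, rfl⟩, hv⟩)

theorem nodup_child {v : V} {ts : List (PTree V)} (h : (verts (node v ts)).Nodup) :
    ∀ c ∈ ts, (verts c).Nodup := by
  rw [verts_node] at h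
  intro c hc
  exact ((List.nodup_flatten.1 (List.nodup_cons.1 h).2).1) (verts c) (List.mem_map.2 ⟨c, hc, rfl⟩)

theorem nodup_tree_eq {v : V} {ts : List (PTree V)} (h : (verts (node v ts)).Nodup)
    {c c' : PTree V} (hc : c ∈ ts) (hc' : c' ∈ ts) {x : V}
    (hx : x ∈ verts c) (hx' : x ∈ verts c') : c = c' := by
  rw [verts_node] at h
  have hp : ts.Pairwise (fun a b => List.Disjoint (verts a) (verts b)) := by
    have := (List.nodup_flatten.1 (List.nodup_cons.1 h).2).2
    exact (List.pairwise_map.1 this)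
  by_contra hne
  have hsymm : Symmetric (fun (a b : PTree V) => List.Disjoint (verts a) (verts b)) :=
    fun a b hd => List.disjoint_comm.mp hd
  haveI : Std.Symm (fun (a b : PTree V) => List.Disjoint (verts a) (verts b)) :=
    ⟨fun a b h => hsymm h⟩
  exact hp.forall hc hc' hne hx hx'

theorem localize_arc {v : V} {ts : List (PTree V)} (h : (verts (node v ts)).Nodup)
    {c : PTree V} (hc : c ∈ ts) {x y : V} (hx : x ∈ verts c)
    (ha : (x, y) ∈ downArcs (node v ts)) : (x, y) ∈ downArcs c := by
  rcases arc_cases.1 ha with ⟨rfl, _⟩ | ⟨c', hc', h'⟩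
  · exact absurd hx (nodup_vnot h c hc)
  · have := arc_fst_mem c' x y h'
    rw [nodup_tree_eq h hc hc' hx this]
    exact h'

theorem arc_antisymm : ∀ (s : PTree V), (verts s).Nodup → ∀ x y : V,
    (x, y) ∈ downArcs s → (y, x) ∈ downArcs s → False := by
  apply ptree_ind
  intro v ts IH hnd x y h1 h2
  rcases arc_cases.1 h1 with ⟨rfl, c, hc, rfl⟩ | ⟨c, hc, h1'⟩
  · rcases arc_cases.1 h2 with ⟨hrc, _⟩ | ⟨c', hc', h2'⟩
    · exact nodup_vnot hnd c hc (hrc ▸ root_mem_verts c)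
    · exact nodup_vnot hnd c' hc' (arc_snd_mem c' _ _ h2')
  · rcases arc_cases.1 h2 with ⟨rfl, _⟩ | ⟨c', hc', h2'⟩
    · exact nodup_vnot hnd c hc (arc_snd_mem c _ _ h1')
    · have hx : x ∈ verts c := arc_fst_mem c _ _ h1'
      have hx' : x ∈ verts c' := arc_snd_mem c' _ _ h2'
      have := nodup_tree_eq hnd hc hc' hx hx'
      subst this
      exact IH c hc (nodup_child hnd c hc) x y h1' h2'

theorem arc_snd_ne_root {v : V} {ts : List (PTree V)} (h : (verts (node v ts)).Nodup)
    {x y : V} (ha : (x, y) ∈ downArcs (node v ts)) : y ≠ v := by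
  obtain ⟨c, hc, hy⟩ := arc_snd_mem_child ha
  intro he
  exact nodup_vnot h c hc (he ▸ hy)

theorem downArcs_subset {v : V} {ts : List (PTree V)} {c : PTree V} (hc : c ∈ ts) :
    downArcs c ⊆ downArcs (node v ts) := by
  intro a ha
  rw [downArcs_node]
  exact List.mem_append.2 (Or.inr (List.mem_flatten.2 ⟨downArcs c, List.mem_map.2 ⟨c, hc, rfl⟩, ha⟩))

theorem root_arc_mem {v : V} {ts : List (PTree V)} {c : PTree V} (hc : c ∈ ts) :
    (v, root c) ∈ downArcs (node v ts) := arc_cases.2 (Or.inl ⟨rfl, c, hc, rfl⟩)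

theorem chain'_dfs : ∀ (s : PTree V),
    List.Chain' (fun x y => (x, y) ∈ downArcs s ∨ (y, x) ∈ downArcs s) (dfs s) := by
  apply ptree_ind
  intro v ts IH
  rw [dfs_node]
  simp only [List.Chain'] at IH ⊢
  induction ts with
  | nil => simp
  | cons c cs ihl =>
    have hc : c ∈ c :: cs := List.mem_cons_self
    simp only [List.map_cons, List.flatten_cons]
    rw [show v :: (dfs c ++ [v] ++ (List.map (fun t => dfs t ++ [v]) cs).flatten)
        = (v :: dfs c) ++ (v :: (List.map (fun t => dfs t ++ [v]) cs).flatten) by simp]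
    rw [List.isChain_append]
    have harc : (v, root c) ∈ downArcs (node v (c :: cs)) := root_arc_mem hc
    have hmono : ∀ a b : V, ((a, b) ∈ downArcs (node v cs) ∨ (b, a) ∈ downArcs (node v cs)) →
        ((a, b) ∈ downArcs (node v (c :: cs)) ∨ (b, a) ∈ downArcs (node v (c :: cs))) := by
      intro a b hab
      rcases hab with h | h <;> rcases arc_cases.1 h with ⟨rfl, c', hc', rfl⟩ | ⟨c', hc', h'⟩
      · exact Or.inl (root_arc_mem (List.mem_cons_of_mem c hc'))
      · exact Or.inl (downArcs_subset (List.mem_cons_of_mem c hc') h')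
      · exact Or.inr (root_arc_mem (List.mem_cons_of_mem c hc'))
      · exact Or.inr (downArcs_subset (List.mem_cons_of_mem c hc') h')
    refine ⟨?_, ?_, ?_⟩
    · rw [List.isChain_cons]
      constructor
      · intro y hy
        rw [head?_dfs c] at hy
        cases hy
        exact Or.inl harc
      · exact (IH c hc).imp (fun a b hab => by
          rcases hab with h | h
          · exact Or.inl (downArcs_subset hc h)
          · exact Or.inr (downArcs_subset hc h))
    · have := ihl (fun c' hc' => IH c' (List.mem_cons_of_mem c hc'))
      exact this.imp hmono
    · intro a ha b hb
      rw [show (v :: dfs c) = [v] ++ dfs c by rfl, List.getLast?_append, getLast?_dfs c] at ha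
      simp only [Option.or, Option.mem_def, Option.some_inj] at ha
      rw [List.head?_cons] at hb
      cases hb
      cases ha
      exact Or.inr harc
end Aux2
section Pos

variable {α : Type}

theorem mem_of_getElem?_eq {w : List α} {l : ℕ} {c : α} (h : w[l]? = some c) : c ∈ w := by
  obtain ⟨hl, rfl⟩ := List.getElem?_eq_some_iff.1 h
  exact List.getElem_mem hl

theorem getElem?_pre_last {w pre rest : List α} (h : w = pre ++ rest) (hp : pre ≠ []) :
    w[pre.length - 1]? = pre.getLast? := by
  subst h
  rw [List.getElem?_append_left (by have := List.length_pos_iff.2 hp; omega), List.getLast?_eq_getElem?]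

theorem getElem?_suf_head {w pre rest : List α} (h : w = pre ++ rest) :
    w[pre.length]? = rest.head? := by
  subst h
  rw [List.getElem?_append_right le_rfl, Nat.sub_self, List.head?_eq_getElem?]

theorem getElem?_mid {w pre Z rest : List α} (h : w = pre ++ Z ++ rest) {j : ℕ}
    (hj : j < Z.length) : w[pre.length + j]? = Z[j]? := by
  subst h
  rw [List.append_assoc, List.getElem?_append_right (Nat.le_add_right _ _),
    Nat.add_sub_cancel_left, List.getElem?_append_left hj]

theorem occ_range {w X Z Y : List α} (h : w = X ++ Z ++ Y) {l : ℕ} {c : α}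
    (hc : w[l]? = some c) (hX : c ∉ X) (hY : c ∉ Y) :
    X.length ≤ l ∧ l < X.length + Z.length := by
  subst h
  rw [List.append_assoc] at hc
  constructor
  · by_contra hlt
    push_neg at hlt
    rw [List.getElem?_append_left hlt] at hc
    exact hX (mem_of_getElem?_eq hc)
  · by_contra hge
    push_neg at hge
    rw [List.getElem?_append_right (by omega)] at hc
    rw [List.getElem?_append_right (by omega)] at hc
    exact hY (mem_of_getElem?_eq hc)

end Pos

section Cyc

variable {V : Type}

theorem length_dfs_eq (t : PTree V) : (dfs t).length = cyclen t + 1 := by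
  have := dfs_ne_nil t
  have := List.length_pos_iff.2 this
  rw [cyclen]
  omega

theorem getElem?_dfs_zero (t : PTree V) : (dfs t)[0]? = some (root t) := by
  rw [← List.head?_eq_getElem?, head?_dfs]

theorem getElem?_dfs_cyclen (t : PTree V) : (dfs t)[cyclen t]? = some (root t) := by
  have h := length_dfs_eq t
  rw [show cyclen t = (dfs t).length - 1 by omega, ← List.getLast?_eq_getElem?, getLast?_dfs]

theorem cyc_eq_getElem? (t : PTree V) (k : ℕ) (hk : k < cyclen t) :
    cyc t k = (dfs t)[k]? := by
  rw [cyc, Nat.mod_eq_of_lt hk]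

theorem cyc_succ_eq_getElem? (t : PTree V) (k : ℕ) (hk : k < cyclen t) :
    cyc t (k + 1) = (dfs t)[k + 1]? := by
  rcases Nat.lt_or_ge (k + 1) (cyclen t) with h | h
  · rw [cyc, Nat.mod_eq_of_lt h]
  · have he : k + 1 = cyclen t := by omega
    rw [cyc, he, Nat.mod_self, getElem?_dfs_zero, getElem?_dfs_cyclen]

theorem cyc_congr {t : PTree V} {a b : ℕ} (h : a % cyclen t = b % cyclen t) :
    cyc t a = cyc t b := by rw [cyc, cyc, h]

theorem cyc_succ_congr {t : PTree V} {a b : ℕ} (h : a % cyclen t = b % cyclen t) :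
    cyc t (a + 1) = cyc t (b + 1) := by
  exact cyc_congr (Nat.ModEq.add_right 1 h)

theorem forwardAt_congr {t : PTree V} {A0 : Set (V × V)} {a b : ℕ}
    (h : a % cyclen t = b % cyclen t) : ForwardAt t A0 a ↔ ForwardAt t A0 b := by
  unfold ForwardAt
  rw [cyc_congr h, cyc_succ_congr h]

theorem upBackAt_congr {t : PTree V} {A0 : Set (V × V)} {a b : ℕ}
    (h : a % cyclen t = b % cyclen t) : UpBackAt t A0 a ↔ UpBackAt t A0 b := by
  unfold UpBackAt
  rw [cyc_congr h, cyc_succ_congr h]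

theorem downBackAt_congr {t : PTree V} {A0 : Set (V × V)} {a b : ℕ}
    (h : a % cyclen t = b % cyclen t) : DownBackAt t A0 a ↔ DownBackAt t A0 b := by
  unfold DownBackAt
  rw [cyc_congr h, cyc_succ_congr h]

end Cyc
section Core

variable {V : Type}

/-- The concatenated child blocks of a node. -/
def blocks (v : V) (cs : List (PTree V)) : List V := (cs.map fun c => dfs c ++ [v]).flatten

theorem blocks_nil (v : V) : blocks v ([] : List (PTree V)) = [] := rfl

theorem blocks_cons (v : V) (c : PTree V) (cs : List (PTree V)) :
    blocks v (c :: cs) = dfs c ++ [v] ++ blocks v cs := by simp [blocks]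

theorem dfs_node_blocks (v : V) (cs : List (PTree V)) :
    dfs (node v cs) = v :: blocks v cs := by rw [dfs_node]; rfl

theorem head?_blocks (v : V) (c : PTree V) (cs : List (PTree V)) :
    (blocks v (c :: cs)).head? = some (root c) := by
  rw [blocks_cons, List.append_assoc, List.head?_append, List.head?_append, head?_dfs]
  rfl

theorem mem_blocks {v y : V} {cs : List (PTree V)} (h : y ∈ blocks v cs) :
    y = v ∨ ∃ c ∈ cs, y ∈ verts c := by
  obtain ⟨l, hl, hyl⟩ := List.mem_flatten.1 h
  obtain ⟨c, hc, rfl⟩ := List.mem_map.1 hl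
  rcases List.mem_append.1 hyl with h' | h'
  · exact Or.inr ⟨c, hc, mem_verts_of_mem_dfs c y h'⟩
  · simp at h'; exact Or.inl h'

theorem verts_subset {v : V} {ts : List (PTree V)} {c : PTree V} (hc : c ∈ ts) :
    verts c ⊆ verts (node v ts) := by
  intro x hx
  rw [verts_node]
  exact List.mem_cons.2 (Or.inr (List.mem_flatten.2 ⟨verts c, List.mem_map.2 ⟨c, hc, rfl⟩, hx⟩))

theorem nodup_pairwise_disjoint {v : V} {ts : List (PTree V)}
    (h : (verts (node v ts)).Nodup) :
    ts.Pairwise (fun a b => ∀ x, x ∈ verts a → x ∈ verts b → False) := by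
  rw [verts_node] at h
  have := (List.nodup_flatten.1 (List.nodup_cons.1 h).2).2
  exact (List.pairwise_map.1 this).imp (fun hab x hx hx' => hab hx hx')

theorem root_node (v : V) (ts : List (PTree V)) : root (node v ts) = v := rfl

/-- The key per-subtree statement: interior positions with good in/out steps are in-indices. -/
def CoreP (t : PTree V) (A0 : Set (V × V)) (s : PTree V) : Prop :=
  ∀ pre suf : List V, ∀ par : V,
    dfs t = pre ++ dfs s ++ suf →
    pre.getLast? = some par →
    suf.head? = some par →
    (par, root s) ∈ downArcs t →
    (∀ y ∈ pre, y ∉ verts s) →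
    (∀ y ∈ suf, y ∉ verts s) →
    (verts s).Nodup →
    AscFirst A0 s →
    (∀ x y : V, (x, y) ∈ downArcs t → x ∈ verts s → (x, y) ∈ downArcs s) →
    downArcs s ⊆ downArcs t →
    (∀ x ∈ verts s, x ≠ root t) →
    ∀ k' : ℕ, k' < (dfs s).length →
    ∀ i : V, (dfs t)[pre.length + k']? = some i →
    (∀ x : V, (dfs t)[pre.length + k' - 1]? = some x → (i, x) ∈ downArcs t → (x, i) ∈ A0) →
    (∀ x : V, (dfs t)[pre.length + k' + 1]? = some x → (i, x) ∈ downArcs t → (i, x) ∈ A0) →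
    InIndex t A0 i (pre.length + k')

theorem slot_inIndex {t : PTree V} {A0 : Set (V × V)}
    (hor : ∀ i j : V, (i, j) ∈ downArcs t → ((i, j) ∈ A0 ↔ (j, i) ∉ A0))
    {v : V} {done cs : List (PTree V)} {pre suf : List V}
    (H1 : dfs t = pre ++ blocks v cs ++ suf)
    (I1a : pre ≠ []) (I1b : pre.getLast? = some v)
    (I2 : ∀ d, done.getLast? = some d → 2 ≤ pre.length ∧
      (dfs t)[pre.length - 2]? = some (root d))
    (I3 : ∀ c ∈ cs, ∀ y ∈ pre, y ∉ verts c)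
    (I5 : ∀ d ∈ done, ∀ (l : ℕ) (x : V), (dfs t)[l]? = some x → x ∈ verts d →
      l < pre.length - 1)
    (Hnd : (verts (node v (done ++ cs))).Nodup)
    (Hasc : AscFirst A0 (node v (done ++ cs)))
    (HlocS : ∀ x y : V, (x, y) ∈ downArcs t → x ∈ verts (node v (done ++ cs)) →
      (x, y) ∈ downArcs (node v (done ++ cs)))
    (Hsub : downArcs (node v (done ++ cs)) ⊆ downArcs t)
    (Hr : ∀ x ∈ verts (node v (done ++ cs)), x ≠ root t)
    (Hsuf : suf ≠ [])
    (i : V) (hi : (dfs t)[pre.length - 1]? = some i)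
    (hin : ∀ x : V, (dfs t)[pre.length - 1 - 1]? = some x → (i, x) ∈ downArcs t → (x, i) ∈ A0)
    (hout : ∀ x : V, (dfs t)[pre.length - 1 + 1]? = some x → (i, x) ∈ downArcs t → (i, x) ∈ A0) :
    InIndex t A0 i (pre.length - 1) := by
  have hpl : 1 ≤ pre.length := List.length_pos_iff.2 I1a
  have hsplit : dfs t = pre ++ (blocks v cs ++ suf) := by rw [H1, List.append_assoc]
  -- identify i = v
  have hiv : i = v := by
    have h := getElem?_pre_last hsplit I1a
    rw [h, I1b] at hi
    exact (Option.some_inj.1 hi).symm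
  subst hiv
  have hvmem : i ∈ verts (node i (done ++ cs)) := by rw [verts_node]; exact List.mem_cons_self
  have hpair : (done ++ cs).Pairwise
      (fun t₁ t₂ => (root t₂, i) ∈ A0 → (root t₁, i) ∈ A0) :=
    ((ascFirst_node A0 i (done ++ cs)).1 Hasc).1
  have hlen : (dfs t).length = pre.length + (blocks i cs).length + suf.length := by
    rw [H1]; simp; omega
  have hsuflen : 1 ≤ suf.length := List.length_pos_iff.2 Hsuf
  refine ⟨?_, hi, Hr i hvmem, ?_⟩
  · have := length_dfs_eq t
    omega
  intro l c hc harc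
  -- c is the root of a child c* in done ++ cs
  have harcs : (i, c) ∈ downArcs (node i (done ++ cs)) := HlocS i c harc hvmem
  have hc' : ∃ cstar ∈ done ++ cs, c = root cstar := by
    rcases arc_cases.1 harcs with ⟨_, cstar, hcst, rfl⟩ | ⟨cstar, hcst, h'⟩
    · exact ⟨cstar, hcst, rfl⟩
    · exact absurd (arc_fst_mem cstar _ _ h') (nodup_vnot Hnd cstar hcst)
  obtain ⟨cstar, hcst, rfl⟩ := hc'
  rcases List.mem_append.1 hcst with hdone | hcs
  · -- processed child: all its occurrences are before the slot
    have hlt : l < pre.length - 1 := I5 cstar hdone l _ hc (root_mem_verts cstar)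
    refine ⟨fun _ => hlt, fun hdesc => ?_⟩
    -- show cstar is ascending, contradiction with hdesc
    have hdne : done ≠ [] := by rintro rfl; exact absurd hdone (List.not_mem_nil)
    obtain ⟨dl, hdl⟩ := Option.isSome_iff_exists.1 (List.getLast?_isSome.2 hdne)
    obtain ⟨hp2, hplast⟩ := I2 dl hdl
    have hdlmem : dl ∈ done := by
      obtain ⟨done', rfl⟩ := List.getLast?_eq_some_iff.1 hdl
      simp
    have harcdl : (i, root dl) ∈ downArcs t :=
      Hsub (root_arc_mem (List.mem_append.2 (Or.inl hdlmem)))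
    have hasc_dl : (root dl, i) ∈ A0 := hin (root dl) hplast harcdl
    -- cstar is before or equal to dl in done
    have hasc_cstar : (root cstar, i) ∈ A0 := by
      obtain ⟨done', rfl⟩ := List.getLast?_eq_some_iff.1 hdl
      rcases List.mem_append.1 hdone with h' | h'
      · have hp1 : (done' ++ [dl]).Pairwise
            (fun t₁ t₂ => (root t₂, i) ∈ A0 → (root t₁, i) ∈ A0) :=
          (List.pairwise_append.1 hpair).1
        exact (List.pairwise_append.1 hp1).2.2 cstar h' dl (List.mem_singleton_self dl)
          hasc_dl
      · simp at h'
        rw [h']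
        exact hasc_dl
    exact absurd hasc_cstar ((hor i (root cstar) harc).1 hdesc)
  · -- remaining child: all its occurrences are after the slot
    have hge : pre.length ≤ l := by
      by_contra hlt
      push_neg at hlt
      rw [hsplit, List.getElem?_append_left hlt] at hc
      exact I3 cstar hcs _ (mem_of_getElem?_eq hc) (root_mem_verts cstar)
    refine ⟨fun hasc => ?_, fun _ => by omega⟩
    -- show cstar is descending, contradiction with hasc
    obtain ⟨c₀, cs', rfl⟩ : ∃ c₀ cs', cs = c₀ :: cs' := by
      rcases cs with _ | ⟨c₀, cs'⟩
      · exact absurd hcs (List.not_mem_nil)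
      · exact ⟨c₀, cs', rfl⟩
    have hhead : (dfs t)[pre.length - 1 + 1]? = some (root c₀) := by
      have h0 : pre.length - 1 + 1 = pre.length := by omega
      rw [h0, getElem?_suf_head hsplit, List.head?_append, head?_blocks]
      rfl
    have harc0 : (i, root c₀) ∈ downArcs t :=
      Hsub (root_arc_mem (List.mem_append.2 (Or.inr (List.mem_cons_self))))
    have hdesc0 : (i, root c₀) ∈ A0 := hout (root c₀) hhead harc0
    have hnasc0 : (root c₀, i) ∉ A0 := (hor i (root c₀) harc0).1 hdesc0
    have hasc0 : (root c₀, i) ∈ A0 := by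
      rcases List.mem_cons.1 hcs with rfl | h'
      · exact hasc
      · have hp1 : (c₀ :: cs').Pairwise
            (fun t₁ t₂ => (root t₂, i) ∈ A0 → (root t₁, i) ∈ A0) :=
          (List.pairwise_append.1 hpair).2.1
        exact (List.pairwise_cons.1 hp1).1 cstar h' hasc
    exact absurd hasc0 hnasc0

end Core
section Core2

variable {V : Type}

theorem core_aux {t : PTree V} {A0 : Set (V × V)}
    (hor : ∀ i j : V, (i, j) ∈ downArcs t → ((i, j) ∈ A0 ↔ (j, i) ∉ A0)) :
    ∀ (cs : List (PTree V)) (done : List (PTree V)) (v : V) (pre suf : List V),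
    dfs t = pre ++ blocks v cs ++ suf →
    pre ≠ [] → pre.getLast? = some v →
    (∀ d, done.getLast? = some d → 2 ≤ pre.length ∧
      (dfs t)[pre.length - 2]? = some (root d)) →
    (∀ c ∈ cs, ∀ y ∈ pre, y ∉ verts c) →
    (∀ c ∈ cs, ∀ y ∈ suf, y ∉ verts c) →
    (∀ d ∈ done, ∀ (l : ℕ) (x : V), (dfs t)[l]? = some x → x ∈ verts d →
      l < pre.length - 1) →
    (verts (node v (done ++ cs))).Nodup →
    AscFirst A0 (node v (done ++ cs)) →
    (∀ x y : V, (x, y) ∈ downArcs t → x ∈ verts (node v (done ++ cs)) →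
      (x, y) ∈ downArcs (node v (done ++ cs))) →
    downArcs (node v (done ++ cs)) ⊆ downArcs t →
    (∀ x ∈ verts (node v (done ++ cs)), x ≠ root t) →
    suf ≠ [] →
    (∀ c ∈ cs, CoreP t A0 c) →
    ∀ k : ℕ, pre.length - 1 ≤ k → k < pre.length + (blocks v cs).length →
    ∀ i : V, (dfs t)[k]? = some i →
    (∀ x : V, (dfs t)[k - 1]? = some x → (i, x) ∈ downArcs t → (x, i) ∈ A0) →
    (∀ x : V, (dfs t)[k + 1]? = some x → (i, x) ∈ downArcs t → (i, x) ∈ A0) →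
    InIndex t A0 i k := by
  intro cs
  induction cs with
  | nil =>
    intro done v pre suf H1 I1a I1b I2 I3 I4 I5 Hnd Hasc HlocS Hsub Hr Hsuf IHouter
      k hk1 hk2 i hi hin hout
    have hpl : 1 ≤ pre.length := List.length_pos_iff.2 I1a
    rw [blocks_nil] at hk2 H1
    have hke : k = pre.length - 1 := by simp at hk2; omega
    subst hke
    exact slot_inIndex hor H1 I1a I1b I2 I3 I5 Hnd Hasc HlocS Hsub Hr Hsuf i hi hin hout
  | cons c₀ cs' ihcs =>
    intro done v pre suf H1 I1a I1b I2 I3 I4 I5 Hnd Hasc HlocS Hsub Hr Hsuf IHouter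
      k hk1 hk2 i hi hin hout
    have hpl : 1 ≤ pre.length := List.length_pos_iff.2 I1a
    have hc₀mem : c₀ ∈ done ++ c₀ :: cs' := List.mem_append.2 (Or.inr (List.mem_cons_self))
    have hlen0 : 1 ≤ (dfs c₀).length := List.length_pos_iff.2 (dfs_ne_nil c₀)
    have hdisj : ∀ c' ∈ cs', ∀ x, x ∈ verts c₀ → x ∈ verts c' → False := by
      have hp := nodup_pairwise_disjoint Hnd
      have hp2 := (List.pairwise_append.1 hp).2.1
      exact fun c' hc' x => (List.pairwise_cons.1 hp2).1 c' hc' x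
    have hblocks' : ∀ y ∈ blocks v cs', y ∉ verts c₀ := by
      intro y hy hyc
      rcases mem_blocks hy with rfl | ⟨c', hc', hy'⟩
      · exact nodup_vnot Hnd c₀ hc₀mem hyc
      · exact hdisj c' hc' y hyc hy'
    rcases Nat.lt_or_ge k pre.length with hlt | hge
    · -- slot case
      have hke : k = pre.length - 1 := by omega
      subst hke
      rw [blocks_cons] at H1
      exact slot_inIndex hor (by rw [H1]; rw [← blocks_cons]) I1a I1b I2 I3 I5 Hnd Hasc
        HlocS Hsub Hr Hsuf i hi hin hout
    · rcases Nat.lt_or_ge k (pre.length + (dfs c₀).length) with hin0 | hge0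
      · -- inside the block of c₀ : use the outer induction hypothesis
        have hcore := IHouter c₀ (List.mem_cons_self)
        have hw : dfs t = pre ++ dfs c₀ ++ ([v] ++ blocks v cs' ++ suf) := by
          rw [H1, blocks_cons]
          simp [List.append_assoc]
        have hsufdisj : ∀ y ∈ [v] ++ blocks v cs' ++ suf, y ∉ verts c₀ := by
          intro y hy
          rcases List.mem_append.1 hy with hy' | hy'
          · rcases List.mem_append.1 hy' with hy'' | hy''
            · simp at hy''
              subst hy''
              exact nodup_vnot Hnd c₀ hc₀mem
            · exact hblocks' y hy''
          · exact fun hc => I4 c₀ (List.mem_cons_self) y hy' hc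
        have harc0 : (v, root c₀) ∈ downArcs t := Hsub (root_arc_mem hc₀mem)
        have hres := hcore pre ([v] ++ blocks v cs' ++ suf) v hw I1b rfl harc0
          (I3 c₀ (List.mem_cons_self)) hsufdisj
          (nodup_child Hnd c₀ hc₀mem)
          (((ascFirst_node A0 v (done ++ c₀ :: cs')).1 Hasc).2 c₀ hc₀mem)
          (fun x y hxy hx => localize_arc Hnd hc₀mem hx (HlocS x y hxy (verts_subset hc₀mem hx)))
          (fun a ha => Hsub (downArcs_subset hc₀mem ha))
          (fun x hx => Hr x (verts_subset hc₀mem hx))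
          (k - pre.length) (by omega) i
        have hkk : pre.length + (k - pre.length) = k := by omega
        rw [hkk] at hres
        exact hres hi hin hout
      · -- beyond the block of c₀ : recurse with done' := done ++ [c₀]
        have hw' : dfs t = (pre ++ (dfs c₀ ++ [v])) ++ blocks v cs' ++ suf := by
          rw [H1, blocks_cons]
          simp [List.append_assoc]
        have hplen' : (pre ++ (dfs c₀ ++ [v])).length = pre.length + (dfs c₀).length + 1 := by
          simp
          omega
        refine ihcs (done ++ [c₀]) v (pre ++ (dfs c₀ ++ [v])) suf hw' (by simp) ?_ ?_ ?_ ?_ ?_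
          ?_ ?_ ?_ ?_ ?_ Hsuf (fun c hc => IHouter c (List.mem_cons_of_mem _ hc)) k ?_ ?_
          i hi hin hout
        · rw [show pre ++ (dfs c₀ ++ [v]) = (pre ++ dfs c₀) ++ [v] by simp]
          exact List.getLast?_concat
        · intro d hd
          rw [List.getLast?_concat] at hd
          cases hd
          constructor
          · simp; omega
          · have hsp : dfs t = (pre ++ dfs c₀) ++ ([v] ++ blocks v cs' ++ suf) := by
              rw [hw']; simp
            have := getElem?_pre_last hsp (by simp [I1a])
            rw [List.getLast?_append, getLast?_dfs] at this
            simp only [hplen', List.length_append] at *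
            rw [show pre.length + (dfs c₀).length + 1 - 2 = pre.length + (dfs c₀).length - 1
              by omega, this]
            rfl
        · intro c hc y hy
          rcases List.mem_append.1 hy with hy' | hy'
          · exact I3 c (List.mem_cons_of_mem _ hc) y hy'
          · rcases List.mem_append.1 hy' with hy'' | hy''
            · intro hyc
              exact hdisj c hc y (mem_verts_of_mem_dfs c₀ y hy'') hyc
            · simp at hy''
              subst hy''
              exact nodup_vnot Hnd c (List.mem_append.2 (Or.inr (List.mem_cons_of_mem _ hc)))
        · exact fun c hc => I4 c (List.mem_cons_of_mem _ hc)
        · intro d hd l x hl hx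
          rcases List.mem_append.1 hd with hd' | hd'
          · have := I5 d hd' l x hl hx
            simp only [hplen']
            omega
          · obtain rfl := (List.mem_singleton.1 hd').symm
            have hocc := occ_range (w := dfs t) (X := pre) (Z := dfs c₀)
              (Y := [v] ++ blocks v cs' ++ suf) (by rw [hw']; simp) hl
              (fun hmem => I3 c₀ (List.mem_cons_self) x hmem hx)
              (by
                intro hmem
                rcases List.mem_append.1 hmem with h' | h'
                · rcases List.mem_append.1 h' with h'' | h''
                  · simp at h''
                    subst h''
                    exact nodup_vnot Hnd c₀ hc₀mem hx
                  · exact hblocks' x h'' hx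
                · exact I4 c₀ (List.mem_cons_self) x h' hx)
            simp only [hplen']
            omega
        · rw [show done ++ [c₀] ++ cs' = done ++ c₀ :: cs' by simp]
          exact Hnd
        · rw [show done ++ [c₀] ++ cs' = done ++ c₀ :: cs' by simp]
          exact Hasc
        · rw [show done ++ [c₀] ++ cs' = done ++ c₀ :: cs' by simp]
          exact HlocS
        · rw [show done ++ [c₀] ++ cs' = done ++ c₀ :: cs' by simp]
          exact Hsub
        · rw [show done ++ [c₀] ++ cs' = done ++ c₀ :: cs' by simp]
          exact Hr
        · simp only [hplen']
          omega
        · rw [blocks_cons] at hk2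
          simp only [hplen']
          simp only [List.length_append, List.length_cons, List.length_nil] at hk2 ⊢
          omega

theorem coreP_all {t : PTree V} {A0 : Set (V × V)}
    (hor : ∀ i j : V, (i, j) ∈ downArcs t → ((i, j) ∈ A0 ↔ (j, i) ∉ A0)) :
    ∀ s : PTree V, CoreP t A0 s := by
  apply ptree_ind
  intro v cs IH pre suf par Hw HpreL HsufH Harc Hdp Hds Hnds Hascs Hlocs Hsubs Hrs
    k' hk' i hi hin hout
  have hsufne : suf ≠ [] := by
    intro h
    rw [h] at HsufH
    simp at HsufH
  have hprene : pre ≠ [] := by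
    intro h
    rw [h] at HpreL
    simp at HpreL
  have hw' : dfs t = (pre ++ [v]) ++ blocks v cs ++ suf := by
    rw [Hw, dfs_node_blocks]
    simp
  have hroot : root (node v cs) = v := rfl
  have hvmem : v ∈ verts (node v cs) := by rw [verts_node]; exact List.mem_cons_self
  have hres := core_aux hor cs [] v (pre ++ [v]) suf hw' (by simp) (List.getLast?_concat)
    (by intro d hd; simp at hd)
    (by
      intro c hc y hy
      rcases List.mem_append.1 hy with hy' | hy'
      · exact fun hyc => Hdp y hy' (verts_subset hc hyc)
      · simp at hy'
        subst hy'
        exact nodup_vnot Hnds c hc)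
    (fun c hc y hy hyc => Hds y hy (verts_subset hc hyc))
    (by intro d hd; simp at hd)
    (by simpa using Hnds) (by simpa using Hascs) (by simpa using Hlocs)
    (by simpa using Hsubs) (by simpa using Hrs) hsufne IH
    (pre.length + k')
    (by simp)
    (by
      have : (dfs (node v cs)).length = 1 + (blocks v cs).length := by
        rw [dfs_node_blocks]; simp; omega
      simp only [List.length_append, List.length_cons, List.length_nil]
      omega)
    i hi hin hout
  exact hres
end Core2
section Triple

variable {V : Type}

/-- Per-subtree statement for the forbidden up-back-then-down-back pattern. -/
def TripleP (t : PTree V) (A0 : Set (V × V)) (s : PTree V) : Prop :=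
  ∀ pre suf : List V,
    dfs t = pre ++ dfs s ++ suf → pre ≠ [] →
    (∀ x, pre.getLast? = some x → (x, root s) ∈ downArcs t) →
    (∀ z, (dfs t)[pre.length + (dfs s).length]? = some z →
      (root s, z) ∈ downArcs t → False) →
    AscFirst A0 s → downArcs s ⊆ downArcs t →
    ∀ (k : ℕ) (x y z : V), (dfs t)[k]? = some x → (dfs t)[k + 1]? = some y →
      (dfs t)[k + 2]? = some z →
      pre.length ≤ k + 1 → k + 1 < pre.length + (dfs s).length →
      (y, x) ∈ downArcs t → (y, z) ∈ downArcs t → (z, y) ∈ A0 → (x, y) ∈ A0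

theorem triple_aux {t : PTree V} {A0 : Set (V × V)} (hnd : (verts t).Nodup) :
    ∀ (cs : List (PTree V)) (v : V) (pre suf : List V),
    dfs t = pre ++ blocks v cs ++ suf →
    pre ≠ [] → pre.getLast? = some v →
    (∀ x, (dfs t)[pre.length - 2]? = some x → (v, x) ∈ downArcs t →
      ∀ c ∈ cs, (root c, v) ∈ A0 → (x, v) ∈ A0) →
    (∀ z, (dfs t)[pre.length + (blocks v cs).length]? = some z →
      (v, z) ∈ downArcs t → False) →
    cs.Pairwise (fun t₁ t₂ => (root t₂, v) ∈ A0 → (root t₁, v) ∈ A0) →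
    (∀ c ∈ cs, (v, root c) ∈ downArcs t) →
    (∀ c ∈ cs, AscFirst A0 c) →
    (∀ c ∈ cs, downArcs c ⊆ downArcs t) →
    (∀ c ∈ cs, TripleP t A0 c) →
    ∀ (k : ℕ) (x y z : V), (dfs t)[k]? = some x → (dfs t)[k + 1]? = some y →
      (dfs t)[k + 2]? = some z →
      pre.length - 1 ≤ k + 1 → k + 1 < pre.length + (blocks v cs).length →
      (y, x) ∈ downArcs t → (y, z) ∈ downArcs t → (z, y) ∈ A0 → (x, y) ∈ A0 := by
  intro cs
  induction cs with
  | nil =>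
    intro v pre suf H1 K1a K1b Kprev Ksuf Kpair KI9 Kasc Ksub IHouter
      k x y z hx hy hz hk1 hk2 hyx hyz hzy
    have hpl : 1 ≤ pre.length := List.length_pos_iff.2 K1a
    rw [blocks_nil] at hk2 H1 Ksuf
    simp only [List.length_nil] at hk2
    -- k+1 = pre.length - 1, and position k+2 = pre.length is covered by Ksuf
    have hke : k + 1 = pre.length - 1 := by omega
    have hyv : y = v := by
      have h := getElem?_pre_last (w := dfs t) (by rw [H1, List.append_assoc]) K1a
      rw [← hke, hy] at h
      rw [K1b] at h
      exact Option.some_inj.1 h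
    subst hyv
    have hk2e : k + 2 = pre.length := by omega
    rw [hk2e] at hz
    exact absurd hyz (fun hc => Ksuf z (by simpa using hz) hc)
  | cons c₀ cs' ihcs =>
    intro v pre suf H1 K1a K1b Kprev Ksuf Kpair KI9 Kasc Ksub IHouter
      k x y z hx hy hz hk1 hk2 hyx hyz hzy
    have hpl : 1 ≤ pre.length := List.length_pos_iff.2 K1a
    have hc₀ : c₀ ∈ c₀ :: cs' := List.mem_cons_self
    have hlen0 : 1 ≤ (dfs c₀).length := List.length_pos_iff.2 (dfs_ne_nil c₀)
    have harc0 : (v, root c₀) ∈ downArcs t := KI9 c₀ hc₀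
    rcases Nat.lt_or_ge (k + 1) pre.length with hlt | hge
    · -- slot case : k+1 = pre.length - 1
      have hke : k + 1 = pre.length - 1 := by omega
      have hyv : y = v := by
        have h := getElem?_pre_last (w := dfs t) (by rw [H1, List.append_assoc]) K1a
        rw [← hke, hy, K1b] at h
        exact Option.some_inj.1 h
      subst hyv
      have hxk : k = pre.length - 2 := by omega
      have hzr : z = root c₀ := by
        have h : (dfs t)[pre.length]? = some (root c₀) := by
          rw [getElem?_suf_head (w := dfs t) (by rw [H1, List.append_assoc]),
            List.head?_append, head?_blocks]
          rfl
        have hk2e : k + 2 = pre.length := by omega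
        rw [hk2e, h] at hz
        exact (Option.some_inj.1 hz).symm
      subst hzr
      exact Kprev x (by rw [← hxk]; exact hx) hyx c₀ hc₀ hzy
    · rcases Nat.lt_or_ge (k + 1) (pre.length + (dfs c₀).length) with hin0 | hge0
      · -- inside the block of c₀
        have htp := IHouter c₀ hc₀
        have hw : dfs t = pre ++ dfs c₀ ++ ([v] ++ blocks v cs' ++ suf) := by
          rw [H1, blocks_cons]
          simp [List.append_assoc]
        refine htp pre ([v] ++ blocks v cs' ++ suf) hw K1a ?_ ?_
          (Kasc c₀ hc₀) (Ksub c₀ hc₀) k x y z hx hy hz hge hin0 hyx hyz hzy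
        · intro x' hx'
          rw [K1b] at hx'
          cases hx'
          exact harc0
        · intro z' hz' harc'
          have hread : (dfs t)[pre.length + (dfs c₀).length]? = some v := by
            have := getElem?_mid (w := dfs t) (pre := pre) (Z := dfs c₀ ++ [v])
              (rest := blocks v cs' ++ suf) (by rw [hw]; simp) (j := (dfs c₀).length)
              (by simp)
            rw [this]
            simp
          rw [hread] at hz'
          cases hz'
          exact arc_antisymm t hnd _ _ harc' harc0
      · -- after the block of c₀ : recurse
        have hw' : dfs t = (pre ++ (dfs c₀ ++ [v])) ++ blocks v cs' ++ suf := by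
          rw [H1, blocks_cons]
          simp [List.append_assoc]
        have hplen' : (pre ++ (dfs c₀ ++ [v])).length = pre.length + (dfs c₀).length + 1 := by
          simp
          omega
        refine ihcs v (pre ++ (dfs c₀ ++ [v])) suf hw' (by simp) ?_ ?_ ?_
          ((List.pairwise_cons.1 Kpair).2) (fun c hc => KI9 c (List.mem_cons_of_mem _ hc))
          (fun c hc => Kasc c (List.mem_cons_of_mem _ hc))
          (fun c hc => Ksub c (List.mem_cons_of_mem _ hc))
          (fun c hc => IHouter c (List.mem_cons_of_mem _ hc))
          k x y z hx hy hz ?_ ?_ hyx hyz hzy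
        · rw [show pre ++ (dfs c₀ ++ [v]) = (pre ++ dfs c₀) ++ [v] by simp]
          exact List.getLast?_concat
        · intro x' hx' _ c hc hcv
          have hread : (dfs t)[(pre ++ (dfs c₀ ++ [v])).length - 2]? = some (root c₀) := by
            have hsp : dfs t = (pre ++ dfs c₀) ++ ([v] ++ blocks v cs' ++ suf) := by
              rw [hw']; simp
            have h := getElem?_pre_last hsp (by simp [K1a])
            rw [List.getLast?_append, getLast?_dfs] at h
            rw [hplen', show pre.length + (dfs c₀).length + 1 - 2 =
              (pre ++ dfs c₀).length - 1 by simp only [List.length_append]; omega, h]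
            rfl
          rw [hread] at hx'
          cases hx'
          exact (List.pairwise_cons.1 Kpair).1 c hc hcv
        · intro z' hz' harc'
          refine Ksuf z' ?_ harc'
          rw [blocks_cons] at *
          rw [← hz']
          congr 1
          simp
          omega
        · rw [hplen']
          omega
        · rw [hplen', blocks_cons] at *
          simp only [List.length_append, List.length_cons, List.length_nil] at hk2 ⊢
          omega

theorem tripleP_all {t : PTree V} {A0 : Set (V × V)} (hnd : (verts t).Nodup) :
    ∀ s : PTree V, TripleP t A0 s := by
  apply ptree_ind
  intro v cs IH pre suf Hw Hpre HpreArc Hsuf Hasc Hsub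
    k x y z hx hy hz hk1 hk2 hyx hyz hzy
  have hw' : dfs t = (pre ++ [v]) ++ blocks v cs ++ suf := by
    rw [Hw, dfs_node_blocks]
    simp
  have hlen : (dfs (node v cs)).length = 1 + (blocks v cs).length := by
    rw [dfs_node_blocks]; simp; omega
  have hpair := ((ascFirst_node A0 v cs).1 Hasc).1
  have hkid := ((ascFirst_node A0 v cs).1 Hasc).2
  refine triple_aux hnd cs v (pre ++ [v]) suf hw' (by simp) (List.getLast?_concat)
    ?_ ?_ hpair
    (fun c hc => Hsub (root_arc_mem hc))
    (fun c hc => hkid c hc)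
    (fun c hc => fun a ha => Hsub (downArcs_subset hc ha))
    (fun c hc => IH c hc)
    k x y z hx hy hz (by simp only [List.length_append, List.length_cons, List.length_nil]; omega) (by simp only [List.length_append, List.length_cons, List.length_nil]; rw [hlen] at hk2; omega) hyx hyz hzy
  · intro x' hx' harc' c hc _
    have hread : (dfs t)[(pre ++ [v]).length - 2]? = some x' := hx'
    have hpl : (pre ++ [v]).length - 2 = pre.length - 1 := by simp
    rw [hpl, getElem?_pre_last (w := dfs t) (by rw [Hw, List.append_assoc]) Hpre] at hread
    exact (arc_antisymm t hnd _ _ harc' (HpreArc x' hread)).elim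
  · intro z' hz' harc'
    refine Hsuf z' ?_ harc'
    rw [← hz']
    congr 1
    simp
    omega

end Triple
section Steps

variable {V : Type} {t : PTree V} {A0 : Set (V × V)}

theorem edge_at {m : ℕ} {x y : V} (hx : (dfs t)[m]? = some x)
    (hy : (dfs t)[m + 1]? = some y) :
    (x, y) ∈ downArcs t ∨ (y, x) ∈ downArcs t := by
  have hc := chain'_dfs t
  simp only [List.Chain', List.isChain_iff_getElem] at hc
  obtain ⟨hm, rfl⟩ := List.getElem?_eq_some_iff.1 hx
  obtain ⟨hm1, rfl⟩ := List.getElem?_eq_some_iff.1 hy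
  simpa using hc m (by omega)

theorem getElem?_dfs_some {m : ℕ} (hm : m < (dfs t).length) : ∃ x, (dfs t)[m]? = some x :=
  ⟨(dfs t)[m], List.getElem?_eq_getElem hm⟩

theorem step_trichotomy (hn : 0 < cyclen t) (q : ℕ) :
    ForwardAt t A0 q ∨ UpBackAt t A0 q ∨ DownBackAt t A0 q := by
  set n := cyclen t with hdefn
  have hm : q % n < n := Nat.mod_lt _ hn
  have hmod : q % n = (q % n) % n := (Nat.mod_eq_of_lt hm).symm
  have hlen := length_dfs_eq t
  obtain ⟨x, hx⟩ := getElem?_dfs_some (t := t) (m := q % n) (by omega)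
  obtain ⟨y, hy⟩ := getElem?_dfs_some (t := t) (m := q % n + 1) (by omega)
  have hcx : cyc t q = some x := by
    rw [cyc_congr (t := t) hmod, cyc_eq_getElem? t _ hm, hx]
  have hcy : cyc t (q + 1) = some y := by
    rw [cyc_succ_congr (t := t) hmod, cyc_succ_eq_getElem? t _ hm, hy]
  rcases edge_at hx hy with he | he
  · by_cases hA : (x, y) ∈ A0
    · exact Or.inl ⟨x, y, hcx, hcy, hA⟩
    · exact Or.inr (Or.inr ⟨x, y, hcx, hcy, he, hA⟩)
  · by_cases hA : (x, y) ∈ A0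
    · exact Or.inl ⟨x, y, hcx, hcy, hA⟩
    · exact Or.inr (Or.inl ⟨x, y, hcx, hcy, he, hA⟩)

theorem forward_not_upback {q : ℕ} (hF : ForwardAt t A0 q) (hU : UpBackAt t A0 q) : False := by
  obtain ⟨x, y, hx, hy, hA⟩ := hF
  obtain ⟨x', y', hx', hy', _, hA'⟩ := hU
  rw [hx] at hx'
  rw [hy] at hy'
  cases hx'
  cases hy'
  exact hA' hA

theorem forward_not_downback {q : ℕ} (hF : ForwardAt t A0 q) (hD : DownBackAt t A0 q) :
    False := by
  obtain ⟨x, y, hx, hy, hA⟩ := hF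
  obtain ⟨x', y', hx', hy', _, hA'⟩ := hD
  rw [hx] at hx'
  rw [hy] at hy'
  cases hx'
  cases hy'
  exact hA' hA

theorem upback_not_downback (hnd : (verts t).Nodup) {q : ℕ} (hU : UpBackAt t A0 q)
    (hD : DownBackAt t A0 q) : False := by
  obtain ⟨x, y, hx, hy, hA, _⟩ := hU
  obtain ⟨x', y', hx', hy', hA', _⟩ := hD
  rw [hx] at hx'
  rw [hy] at hy'
  cases hx'
  cases hy'
  exact arc_antisymm t hnd _ _ hA' hA

theorem inIndex_not_upback
    (hor : ∀ i j : V, (i, j) ∈ downArcs t → ((i, j) ∈ A0 ↔ (j, i) ∉ A0))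
    {i : V} {k : ℕ} (h : InIndex t A0 i k) :
    ¬ UpBackAt t A0 (k + cyclen t - 1) := by
  obtain ⟨hk, hik, hir, hall⟩ := h
  have hn : 0 < cyclen t := by omega
  rintro ⟨x, y, hx, hy, hyx, hna⟩
  have he1 : k + cyclen t - 1 + 1 = k + cyclen t := by omega
  have hyi : y = i := by
    rw [he1] at hy
    have : cyc t (k + cyclen t) = some i := by
      rw [cyc_congr (t := t) (a := k + cyclen t) (b := k)
        (by rw [Nat.add_mod_right, Nat.mod_eq_of_lt hk]), cyc_eq_getElem? t _ hk, hik]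
    rw [this] at hy
    exact (Option.some_inj.1 hy).symm
  rw [hyi] at hyx hna
  rcases Nat.eq_zero_or_pos k with rfl | hk1
  · rw [getElem?_dfs_zero] at hik
    exact hir (Option.some_inj.1 hik).symm
  · have hxpos : cyc t (k + cyclen t - 1) = (dfs t)[k - 1]? := by
      rw [show k + cyclen t - 1 = (k - 1) + cyclen t by omega]
      rw [cyc_congr (t := t) (a := k - 1 + cyclen t) (b := k - 1)
        (by rw [Nat.add_mod_right]), cyc_eq_getElem? t _ (by omega)]
    rw [hxpos] at hx
    have h2 := (hall (k - 1) x hx hyx).2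
    have hiA : (i, x) ∈ A0 := by
      rcases (hor i x hyx).2 hna with h'
      exact h'
    have := h2 hiA
    omega

theorem inIndex_not_downback
    (hor : ∀ i j : V, (i, j) ∈ downArcs t → ((i, j) ∈ A0 ↔ (j, i) ∉ A0))
    {i : V} {k : ℕ} (h : InIndex t A0 i k) :
    ¬ DownBackAt t A0 k := by
  obtain ⟨hk, hik, hir, hall⟩ := h
  rintro ⟨x, y, hx, hy, hxy, hna⟩
  have hxi : x = i := by
    rw [cyc_eq_getElem? t _ hk, hik] at hx
    exact (Option.some_inj.1 hx).symm
  rw [hxi] at hxy hna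
  rw [cyc_succ_eq_getElem? t _ hk] at hy
  have h1 := (hall (k + 1) y hy hxy).1
  have hyA : (y, i) ∈ A0 := by
    by_contra hc
    exact hna ((hor i y hxy).2 hc)
  have := h1 hyA
  omega

end Steps
section Root

variable {V : Type} {r : V} {t₁ t₂ : PTree V} {A0 : Set (V × V)}

theorem two_blocks (r : V) (t₁ t₂ : PTree V) :
    dfs (node r [t₁, t₂]) = [r] ++ dfs t₁ ++ ([r] ++ (dfs t₂ ++ [r])) := by
  rw [dfs_node_blocks, blocks_cons, blocks_cons, blocks_nil]
  simp

theorem two_blocks' (r : V) (t₁ t₂ : PTree V) :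
    dfs (node r [t₁, t₂]) = ([r] ++ (dfs t₁ ++ [r])) ++ dfs t₂ ++ [r] := by
  rw [two_blocks]
  simp

theorem blocks_two_len (r : V) (t₁ t₂ : PTree V) :
    (blocks r [t₁, t₂]).length = cyclen (node r [t₁, t₂]) := by
  have h := length_dfs_eq (node r [t₁, t₂])
  rw [dfs_node_blocks] at h
  simp only [List.length_cons] at h
  omega

theorem cyclen_pos (r : V) (t₁ t₂ : PTree V) : 0 < cyclen (node r [t₁, t₂]) := by
  have h := length_dfs_eq (node r [t₁, t₂])
  have h2 : (dfs (node r [t₁, t₂])).length =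
      1 + (dfs t₁).length + (1 + ((dfs t₂).length + 1)) := by
    rw [two_blocks]; simp; omega
  have := List.length_pos_iff.2 (dfs_ne_nil t₁)
  omega

theorem no_arc_to_root (hnd : (verts (node r [t₁, t₂])).Nodup) {x : V}
    (h : (x, r) ∈ downArcs (node r [t₁, t₂])) : False :=
  arc_snd_ne_root hnd h rfl

theorem child_of_root (hnd : (verts (node r [t₁, t₂])).Nodup) {c : V}
    (h : (r, c) ∈ downArcs (node r [t₁, t₂])) : c = root t₁ ∨ c = root t₂ := by
  rcases arc_cases.1 h with ⟨_, c', hc', rfl⟩ | ⟨c', hc', h'⟩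
  · rcases List.mem_cons.1 hc' with rfl | hc''
    · exact Or.inl rfl
    · rcases List.mem_cons.1 hc'' with rfl | hc'''
      · exact Or.inr rfl
      · exact absurd hc''' (List.not_mem_nil)
  · exact absurd (arc_fst_mem c' _ _ h') (nodup_vnot hnd c' hc')

theorem verts_disj (hnd : (verts (node r [t₁, t₂])).Nodup) :
    ∀ x, x ∈ verts t₁ → x ∈ verts t₂ → False := by
  have hp := nodup_pairwise_disjoint hnd
  exact fun x h1 h2 => (List.pairwise_cons.1 hp).1 t₂ (by simp) x h1 h2

theorem l2_hard (hnd : (verts (node r [t₁, t₂])).Nodup)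
    (hor : ∀ i j : V, (i, j) ∈ downArcs (node r [t₁, t₂]) → ((i, j) ∈ A0 ↔ (j, i) ∉ A0))
    (hroot : ((r, root t₁) ∈ A0 ↔ (r, root t₂) ∈ A0))
    (hasc : AscFirst A0 (node r [t₁, t₂]))
    {k : ℕ} (hk : k < cyclen (node r [t₁, t₂])) :
    (∃ i, InIndex (node r [t₁, t₂]) A0 i k) ∨
      UpBackAt (node r [t₁, t₂]) A0 (k + cyclen (node r [t₁, t₂]) - 1) ∨
      DownBackAt (node r [t₁, t₂]) A0 k := by
  set T := node r [t₁, t₂] with hT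
  set n := cyclen T with hn'
  have hn : 0 < n := cyclen_pos r t₁ t₂
  by_cases hU : UpBackAt T A0 (k + n - 1)
  · exact Or.inr (Or.inl hU)
  by_cases hD : DownBackAt T A0 k
  · exact Or.inr (Or.inr hD)
  left
  have hlen := length_dfs_eq T
  obtain ⟨i, hi⟩ := getElem?_dfs_some (t := T) (m := k) (by omega)
  have hcyck : cyc T k = some i := by rw [cyc_eq_getElem? T _ hk, hi]
  have hcyckn : cyc T (k + n) = some i := by
    rw [cyc_congr (t := T) (a := k + n) (b := k) (by rw [Nat.add_mod_right, Nat.mod_eq_of_lt hk]),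
      hcyck]
  -- the two "good step" facts obtained from ¬U and ¬D
  have hinc : 1 ≤ k → ∀ x, (dfs T)[k - 1]? = some x → (i, x) ∈ downArcs T → (x, i) ∈ A0 := by
    intro hk1 x hx harc
    by_contra hc
    apply hU
    refine ⟨x, i, ?_, ?_, harc, hc⟩
    · rw [show k + n - 1 = (k - 1) + n by omega,
        cyc_congr (t := T) (a := (k - 1) + n) (b := k - 1) (by rw [Nat.add_mod_right]),
        cyc_eq_getElem? T _ (by omega), hx]
    · rw [show k + n - 1 + 1 = k + n by omega]
      exact hcyckn
  have houtc : ∀ y, (dfs T)[k + 1]? = some y → (i, y) ∈ downArcs T → (i, y) ∈ A0 := by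
    intro y hy harc
    by_contra hc
    exact hD ⟨i, y, hcyck, by rw [cyc_succ_eq_getElem? T _ hk, hy], harc, hc⟩
  have him := mem_verts_of_mem_dfs T i (mem_of_getElem?_eq hi)
  rw [hT, verts_node] at him
  simp only [List.map_cons, List.map_nil, List.flatten_cons, List.flatten_nil,
    List.append_nil, List.mem_cons, List.mem_append] at him
  rcases him with rfl | him1 | him2
  · -- i = r : derive a contradiction using hroot
    exfalso
    -- the successor of position k
    obtain ⟨xn, hxn⟩ := getElem?_dfs_some (t := T) (m := k + 1) (by omega)
    have hexn : (i, xn) ∈ downArcs T := by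
      rcases edge_at hi hxn with he | he
      · exact he
      · exact absurd he (fun hc => no_arc_to_root hnd hc)
    have hxnA : (i, xn) ∈ A0 := houtc xn hxn hexn
    -- the predecessor of position k (cyclically)
    have hj : (k + n - 1) % n < n := Nat.mod_lt _ hn
    obtain ⟨xp, hxp⟩ := getElem?_dfs_some (t := T) (m := (k + n - 1) % n) (by omega)
    have hcyp : cyc T (k + n - 1) = some xp := by
      rw [cyc_congr (t := T) (a := k + n - 1) (b := (k + n - 1) % n)
        (by rw [Nat.mod_mod_of_dvd _ (dvd_refl _)]), cyc_eq_getElem? T _ hj, hxp]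
    have hcypn : (dfs T)[(k + n - 1) % n + 1]? = some i := by
      rw [← cyc_succ_eq_getElem? T _ hj,
        cyc_succ_congr (t := T) (a := (k + n - 1) % n) (b := k + n - 1)
          (by rw [Nat.mod_mod_of_dvd _ (dvd_refl _)]),
        show k + n - 1 + 1 = k + n by omega]
      exact hcyckn
    have hexp : (i, xp) ∈ downArcs T := by
      rcases edge_at hxp hcypn with he | he
      · exact absurd he (fun hc => no_arc_to_root hnd hc)
      · exact he
    have hxpA : (xp, i) ∈ A0 := by
      by_contra hc
      exact hU ⟨xp, i, hcyp, by rw [show k + n - 1 + 1 = k + n by omega]; exact hcyckn,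
        hexp, hc⟩
    have hxpA' : (i, xp) ∉ A0 := by
      intro hc
      exact (hor i xp hexp).1 hc hxpA
    rcases child_of_root hnd hexp with h1 | h1 <;> rcases child_of_root hnd hexn with h2 | h2
    · rw [h1] at hxpA'; rw [h2] at hxnA; exact hxpA' hxnA
    · rw [h1] at hxpA'; rw [h2] at hxnA; exact hxpA' (hroot.2 hxnA)
    · rw [h1] at hxpA'; rw [h2] at hxnA; exact hxpA' (hroot.1 hxnA)
    · rw [h1] at hxpA'; rw [h2] at hxnA; exact hxpA' hxnA
  · -- i in the first subtree
    have hir : i ≠ r := fun he => nodup_vnot hnd t₁ (by simp) (he ▸ him1)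
    have hocc := occ_range (two_blocks r t₁ t₂) hi (by simp [hir])
      (by
        intro hmem
        simp only [List.mem_append, List.mem_cons, List.not_mem_nil] at hmem
        rcases hmem with h' | h' | h'
        · simp at h'; exact hir h'
        · exact verts_disj hnd i him1 (mem_verts_of_mem_dfs t₂ i h')
        · simp at h'; exact hir h')
    simp only [List.length_append, List.length_cons, List.length_nil] at hocc
    have hk1 : 1 ≤ k := by omega
    have hres := coreP_all hor t₁ [r] ([r] ++ (dfs t₂ ++ [r])) r (two_blocks r t₁ t₂)
      (by simp) (by simp)
      (root_arc_mem (by simp))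
      (by intro y hy; simp at hy; subst hy; exact nodup_vnot hnd t₁ (by simp))
      (by
        intro y hy hyc
        simp only [List.mem_append, List.mem_cons, List.not_mem_nil] at hy
        rcases hy with h' | h' | h'
        · simp at h'; subst h'; exact nodup_vnot hnd t₁ (by simp) hyc
        · exact verts_disj hnd y hyc (mem_verts_of_mem_dfs t₂ y h')
        · simp at h'; subst h'; exact nodup_vnot hnd t₁ (by simp) hyc)
      (nodup_child hnd t₁ (by simp))
      (((ascFirst_node A0 r [t₁, t₂]).1 hasc).2 t₁ (by simp))
      (fun x y hxy hx => localize_arc hnd (by simp) hx hxy)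
      (downArcs_subset (by simp))
      (by
        intro x hx he
        rw [hT, root_node] at he
        exact nodup_vnot hnd t₁ (by simp) (he ▸ hx))
      (k - 1) (by omega) i
    have hkk : List.length [r] + (k - 1) = k := by simp; omega
    rw [hkk] at hres
    exact ⟨i, hres hi (fun x hx harc => hinc hk1 x hx harc)
      (fun y hy harc => houtc y hy harc)⟩
  · -- i in the second subtree
    have hir : i ≠ r := fun he => nodup_vnot hnd t₂ (by simp) (he ▸ him2)
    have hocc := occ_range (two_blocks' r t₁ t₂) hi
      (by
        intro hmem
        simp only [List.mem_append, List.mem_cons, List.not_mem_nil] at hmem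
        rcases hmem with h' | h' | h'
        · simp at h'; exact hir h'
        · exact verts_disj hnd i (mem_verts_of_mem_dfs t₁ i h') him2
        · simp at h'; exact hir h')
      (by simp [hir])
    simp only [List.length_append, List.length_cons, List.length_nil] at hocc
    have hk1 : 1 ≤ k := by omega
    have hres := coreP_all hor t₂ ([r] ++ (dfs t₁ ++ [r])) [r] r (two_blocks' r t₁ t₂)
      (by rw [show [r] ++ (dfs t₁ ++ [r]) = ([r] ++ dfs t₁) ++ [r] by simp]
          exact List.getLast?_concat)
      (by simp)
      (root_arc_mem (by simp))
      (by
        intro y hy hyc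
        simp only [List.mem_append, List.mem_cons, List.not_mem_nil] at hy
        rcases hy with h' | h' | h'
        · simp at h'; subst h'; exact nodup_vnot hnd t₂ (by simp) hyc
        · exact verts_disj hnd y (mem_verts_of_mem_dfs t₁ y h') hyc
        · simp at h'; subst h'; exact nodup_vnot hnd t₂ (by simp) hyc)
      (by intro y hy; simp at hy; subst hy; exact nodup_vnot hnd t₂ (by simp))
      (nodup_child hnd t₂ (by simp))
      (((ascFirst_node A0 r [t₁, t₂]).1 hasc).2 t₂ (by simp))
      (fun x y hxy hx => localize_arc hnd (by simp) hx hxy)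
      (downArcs_subset (by simp))
      (by
        intro x hx he
        rw [hT, root_node] at he
        exact nodup_vnot hnd t₂ (by simp) (he ▸ hx))
      (k - ([r] ++ (dfs t₁ ++ [r])).length) (by simp at hocc ⊢; omega) i
    have hkk : ([r] ++ (dfs t₁ ++ [r])).length + (k - ([r] ++ (dfs t₁ ++ [r])).length) = k := by
      simp at hocc ⊢
      omega
    rw [hkk] at hres
    exact ⟨i, hres hi (fun x hx harc => hinc hk1 x hx harc)
      (fun y hy harc => houtc y hy harc)⟩

end Root
section L3

variable {V : Type} {r : V} {t₁ t₂ : PTree V} {A0 : Set (V × V)}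

theorem no_up_then_down (hnd : (verts (node r [t₁, t₂])).Nodup)
    (hor : ∀ i j : V, (i, j) ∈ downArcs (node r [t₁, t₂]) → ((i, j) ∈ A0 ↔ (j, i) ∉ A0))
    (hroot : ((r, root t₁) ∈ A0 ↔ (r, root t₂) ∈ A0))
    (hasc : AscFirst A0 (node r [t₁, t₂]))
    {q : ℕ} (hU : UpBackAt (node r [t₁, t₂]) A0 q)
    (hD : DownBackAt (node r [t₁, t₂]) A0 (q + 1)) : False := by
  set T := node r [t₁, t₂] with hT
  set n := cyclen T with hn'
  have hn : 0 < n := cyclen_pos r t₁ t₂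
  have hlen := length_dfs_eq T
  set m := q % n with hm'
  have hm : m < n := Nat.mod_lt _ hn
  have hmm : q % n = m % n := by rw [hm', Nat.mod_mod_of_dvd _ (dvd_refl _)]
  have hU' : UpBackAt T A0 m := (upBackAt_congr (t := T) hmm).1 hU
  have hD' : DownBackAt T A0 (m + 1) :=
    (downBackAt_congr (t := T) (Nat.ModEq.add_right 1 hmm)).1 hD
  obtain ⟨x, y, hx, hy, hyx, hna⟩ := hU'
  rw [cyc_eq_getElem? T _ hm] at hx
  rw [cyc_succ_eq_getElem? T _ hm] at hy
  rcases Nat.lt_or_ge (m + 1) n with hm1 | hm1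
  · -- interior triple
    obtain ⟨y', z, hy', hz, hyz, hnaz⟩ := hD'
    rw [cyc_eq_getElem? T _ hm1, hy] at hy'
    cases hy'
    rw [cyc_succ_eq_getElem? T _ hm1] at hz
    have hzy : (z, y) ∈ A0 := by
      by_contra hc
      exact hnaz ((hor y z hyz).2 hc)
    have hblen : (blocks r [t₁, t₂]).length = n := by
      rw [hn', hT]; exact blocks_two_len r t₁ t₂
    have hxy : (x, y) ∈ A0 := by
      refine triple_aux hnd [t₁, t₂] r [r] [] ?_ (by simp) (by simp) ?_ ?_
        (((ascFirst_node A0 r [t₁, t₂]).1 hasc).1)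
        (fun c hc => root_arc_mem hc)
        (fun c hc => ((ascFirst_node A0 r [t₁, t₂]).1 hasc).2 c hc)
        (fun c hc => downArcs_subset hc)
        (fun c hc => tripleP_all hnd c)
        m x y z hx hy hz (by simp) (by simp; omega) hyx hyz hzy
      · rw [dfs_node_blocks]; simp
      · intro x' hx' harc' c hc _
        simp only [List.length_cons, List.length_nil] at hx'
        rw [show 1 - 2 = 0 by omega, getElem?_dfs_zero] at hx'
        cases hx'
        exact (arc_antisymm T hnd _ _ harc' harc').elim
      · intro z' hz' _
        rw [List.getElem?_eq_none (by simp; omega)] at hz'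
        cases hz'
    exact hna hxy
  · -- wrap-around case : use hroot
    have hmn : m + 1 = n := by omega
    have hyr : y = r := by
      rw [hmn, show (dfs T)[n]? = some (root T) from getElem?_dfs_cyclen T] at hy
      have h := Option.some_inj.1 hy
      rw [hT, root_node] at h
      exact h.symm
    rw [hyr] at hyx hna
    have hrxA : (r, x) ∈ A0 := (hor r x hyx).2 hna
    have hD'' : DownBackAt T A0 0 :=
      (downBackAt_congr (t := T) (a := m + 1) (b := 0) (by rw [hmn]; simp [hn'])).1 hD'
    obtain ⟨x', z, hx', hz, hxz, hnaz⟩ := hD''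
    rw [cyc_eq_getElem? T 0 hn, getElem?_dfs_zero] at hx'
    have hx'r : x' = r := (Option.some_inj.1 hx').symm
    subst hx'r
    rcases child_of_root hnd hyx with h1 | h1 <;> rcases child_of_root hnd hxz with h2 | h2
    · rw [h1] at hrxA; rw [h2] at hnaz; exact hnaz hrxA
    · rw [h1] at hrxA; rw [h2] at hnaz; exact hnaz (hroot.1 hrxA)
    · rw [h1] at hrxA; rw [h2] at hnaz; exact hnaz (hroot.2 hrxA)
    · rw [h1] at hrxA; rw [h2] at hnaz; exact hnaz hrxA

end L3
/-- **Interlacing of in-indices and forward steps.** For the cyclic DFS walk on the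
plane rooted tree `T₀` (root with exactly two children whose edges are oriented the
same way, ascending children preceding descending ones): between two cyclically
consecutive in-indices `u` and `v` there is exactly one forward step; all steps before
it are upward-backward and all steps after it are downward-backward. -/
theorem in_indices_interlace_forward_steps (r : V) (t₁ t₂ : PTree V)
    (A0 : Set (V × V))
    (hnd : (verts (node r [t₁, t₂])).Nodup)
    (hor : ∀ i j : V, (i, j) ∈ downArcs (node r [t₁, t₂]) →
      ((i, j) ∈ A0 ↔ (j, i) ∉ A0))
    (hroot : ((r, root t₁) ∈ A0 ↔ (r, root t₂) ∈ A0))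
    (hasc : AscFirst A0 (node r [t₁, t₂])) :
    ∀ u v : ℕ, (∃ i, InIndex (node r [t₁, t₂]) A0 i u) →
      (∃ j, InIndex (node r [t₁, t₂]) A0 j v) → u ≠ v →
      (∀ l : ℕ, u < l → l < (if u < v then v else v + cyclen (node r [t₁, t₂])) →
        ¬ ∃ i, InIndex (node r [t₁, t₂]) A0 i (l % cyclen (node r [t₁, t₂]))) →
      ∃ p, u ≤ p ∧ p < (if u < v then v else v + cyclen (node r [t₁, t₂])) ∧
        ForwardAt (node r [t₁, t₂]) A0 p ∧
        (∀ q, u ≤ q → q < p → UpBackAt (node r [t₁, t₂]) A0 q) ∧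
        (∀ q, p < q → q < (if u < v then v else v + cyclen (node r [t₁, t₂])) →
          DownBackAt (node r [t₁, t₂]) A0 q) ∧
        (∀ p', u ≤ p' → p' < (if u < v then v else v + cyclen (node r [t₁, t₂])) →
          ForwardAt (node r [t₁, t₂]) A0 p' → p' = p) := by
  classical
  intro u v hu hv huv hno
  set T := node r [t₁, t₂] with hT
  set n := cyclen T with hn'
  obtain ⟨iu, hiu⟩ := hu
  obtain ⟨jv, hjv⟩ := hv
  have hun : u < n := hiu.1
  have hvn : v < n := hjv.1
  have hn : 0 < n := by omega
  set Vb := if u < v then v else v + n with hVb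
  have hltV : u < Vb := by
    rw [hVb]
    split <;> omega
  have hnotU : ¬ UpBackAt T A0 (Vb - 1) := by
    have h0 := inIndex_not_upback (t := T) hor hjv
    intro hc
    apply h0
    refine (upBackAt_congr (t := T) (a := v + n - 1) (b := Vb - 1) ?_).2 hc
    rw [hVb]
    split
    · next hlt =>
      have hv1 : 1 ≤ v := by omega
      rw [show v + n - 1 = (v - 1) + n by omega, Nat.add_mod_right,
        Nat.mod_eq_of_lt (by omega : v - 1 < n)]
    · rfl
  have hnotDu : ¬ DownBackAt T A0 u := inIndex_not_downback (t := T) hor hiu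
  have hINT : ∀ l, u < l → l < Vb → UpBackAt T A0 (l - 1) ∨ DownBackAt T A0 l := by
    intro l hl1 hl2
    have hlm : l % n < n := Nat.mod_lt _ hn
    have hl2' := l2_hard (A0 := A0) hnd hor hroot hasc hlm
    rcases hl2' with hIn | hU | hD
    · exact absurd hIn (hno l hl1 hl2)
    · left
      refine (upBackAt_congr (t := T) (a := l % n + n - 1) (b := l - 1) ?_).1 hU
      calc (l % n + n - 1) % n = (l % n + (n - 1)) % n := by
            rw [show l % n + n - 1 = l % n + (n - 1) by omega]
        _ = (l + (n - 1)) % n := Nat.ModEq.add_right (n - 1) (Nat.mod_modEq l n)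
        _ = ((l - 1) + n) % n := by rw [show l + (n - 1) = (l - 1) + n by omega]
        _ = (l - 1) % n := Nat.add_mod_right _ _
    · right
      exact (downBackAt_congr (t := T) (a := l % n) (b := l)
        (Nat.mod_modEq l n)).1 hD
  have hex : ∃ d, ¬ UpBackAt T A0 (u + d) :=
    ⟨Vb - 1 - u, by rw [show u + (Vb - 1 - u) = Vb - 1 by omega]; exact hnotU⟩
  have hpu : u ≤ u + Nat.find hex := Nat.le_add_right _ _
  have hpU : ¬ UpBackAt T A0 (u + Nat.find hex) := Nat.find_spec hex
  set p := u + Nat.find hex with hp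
  have hbefore : ∀ q, u ≤ q → q < p → UpBackAt T A0 q := by
    intro q hq1 hq2
    by_contra hc
    exact Nat.find_min hex (m := q - u) (by omega)
      (by rw [show u + (q - u) = q by omega]; exact hc)
  have hpltV : p < Vb := by
    by_contra hc
    push_neg at hc
    exact hnotU (hbefore (Vb - 1) (by omega) (by omega))
  have hpF : ForwardAt T A0 p := by
    rcases step_trichotomy (t := T) (A0 := A0) hn p with h | h | h
    · exact h
    · exact absurd h hpU
    · exfalso
      by_cases hup : u = p
      · rw [← hup] at h
        exact hnotDu h
      · have hup' : u < p := by omega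
        have hU' := hbefore (p - 1) (by omega) (by omega)
        have hD' : DownBackAt T A0 (p - 1 + 1) := by
          rw [show p - 1 + 1 = p by omega]
          exact h
        exact no_up_then_down hnd hor hroot hasc hU' hD'
  have hafter : ∀ q, p < q → q < Vb → DownBackAt T A0 q := by
    have key : ∀ q, p + 1 ≤ q → q < Vb → DownBackAt T A0 q := by
      intro q hq
      induction q, hq using Nat.le_induction with
      | base =>
        intro hlt
        rcases hINT (p + 1) (by omega) hlt with hU' | hD'
        · rw [show p + 1 - 1 = p by omega] at hU'
          exact absurd hU' hpU
        · exact hD'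
      | succ q hq ih =>
        intro hlt
        have hDq := ih (by omega)
        rcases hINT (q + 1) (by omega) (by omega) with hU' | hD'
        · rw [show q + 1 - 1 = q by omega] at hU'
          exact absurd hDq (fun hD => upback_not_downback (t := T) hnd hU' hD)
        · exact hD'
    exact fun q hq1 hq2 => key q (by omega) hq2
  refine ⟨p, hpu, hpltV, hpF, hbefore, hafter, ?_⟩
  intro p' h1 h2 hF'
  rcases lt_trichotomy p' p with h | h | h
  · exact absurd (hbefore p' h1 h) (fun hU' => forward_not_upback hF' hU')
  · exact h
  · exact absurd (hafter p' h h2) (fun hD' => forward_not_downback hF' hD')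

end PTree
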